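/- Let G be a DAG with two-layer partition X ≺ Y and let P be faithful to G. If there is a directed path X_{k0} → Y_{j1} → ⋯ → Y_{j0} entirely within Y after the first step, and X_{k0} → Y_{j0} is not an edge of G, then Y_{j0} is conditionally dependent on X_{k0} given X_{-k0}; hence H^(0) contains the false positive edge X_{k0} → Y_{j0}. -/

import Mathlib

/-- Directed reachability in a digraph (reflexive-transitive closure of the edge relation). -/
def Reaches {V : Type*} (G : V → V → Prop) : V → V → Prop := Relation.ReflTransGen G

/-- A digraph is acyclic if no vertex lies on a directed cycle. -/
def Acyclic {V : Type*} (G : V → V → Prop) : Prop := ∀ v, ¬ Relation.TransGen G v v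

/-- `p` is an (undirected) path from `a` to `b` in the digraph `G`. -/
def IsTrail {V : Type*} (G : V → V → Prop) (a b : V) (p : List V) : Prop :=
  p.Chain' (fun x y => G x y ∨ G y x) ∧ p.head? = some a ∧ p.getLast? = some b ∧ p.Nodup

/-- Consecutive triples of a list. -/
def triples {V : Type*} : List V → List (V × V × V)
  | x :: y :: z :: r => (x, y, z) :: triples (y :: z :: r)
  | _ => []

/-- A triple `(x, y, z)` on a path is blocked by `S` if `y` is a collider none of whose
descendants lies in `S`, or `y` is a non-collider belonging to `S`. -/
def BlockedTriple {V : Type*} [DecidableEq V] (G : V → V → Prop) (S : Finset V)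
    (t : V × V × V) : Prop :=
  (G t.1 t.2.1 ∧ G t.2.2 t.2.1 ∧ ∀ d, Reaches G t.2.1 d → d ∉ S)
  ∨ (¬ (G t.1 t.2.1 ∧ G t.2.2 t.2.1) ∧ t.2.1 ∈ S)

/-- A path is blocked by `S` if some internal triple is blocked. -/
def Blocked {V : Type*} [DecidableEq V] (G : V → V → Prop) (S : Finset V) (p : List V) : Prop :=
  ∃ t ∈ triples p, BlockedTriple G S t

/-- `S` d-separates `a` and `b` in `G` if every path between them is blocked. -/
def DSep {V : Type*} [DecidableEq V] (G : V → V → Prop) (S : Finset V) (a b : V) : Prop :=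
  ∀ p : List V, IsTrail G a b p → Blocked G S p

private lemma chain_mem_transGen' {V : Type*} {R : V → V → Prop} :
    ∀ {l : List V} {a b : V}, List.Chain R a l → b ∈ l → Relation.TransGen R a b := by
  intro l
  induction l with
  | nil => intro a b _ hb; simp at hb
  | cons c t ih =>
    intro a b hc hb
    replace hc := List.chain_cons.1 hc
    rcases List.mem_cons.1 hb with rfl | hb
    · exact Relation.TransGen.single hc.1
    · exact Relation.TransGen.head hc.1 (ih hc.2 hb)

private lemma chain_nodup' {V : Type*} {R : V → V → Prop}
    (hacy : ∀ v, ¬ Relation.TransGen R v v) :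
    ∀ {l : List V} {a : V}, List.Chain R a l → (a :: l).Nodup := by
  intro l
  induction l with
  | nil => intro a _; simp
  | cons c t ih =>
    intro a hc
    replace hc := List.chain_cons.1 hc
    refine List.nodup_cons.2 ⟨?_, ih hc.2⟩
    intro hmem
    exact hacy a (chain_mem_transGen' (List.chain_cons.2 ⟨hc.1, hc.2⟩) hmem)

private lemma triples_chain' {V : Type*} {R : V → V → Prop} :
    ∀ {q : List V}, List.Chain' R q → ∀ t ∈ triples q, R t.1 t.2.1 ∧ R t.2.1 t.2.2
  | [], _, t, ht => by simp [triples] at ht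
  | [x], _, t, ht => by simp [triples] at ht
  | [x, y], _, t, ht => by simp [triples] at ht
  | x :: y :: z :: r, hc, t, ht => by
    replace hc := List.isChain_cons_cons.1 hc
    rcases List.mem_cons.1 ht with rfl | ht
    · exact ⟨hc.1, (List.isChain_cons_cons.1 hc.2).1⟩
    · exact triples_chain' hc.2 t ht

private lemma triples_mid_mem {V : Type*} :
    ∀ {q : List V} {a : V} {t : V × V × V}, t ∈ triples (a :: q) → t.2.1 ∈ q
  | [], a, t, ht => by simp [triples] at ht
  | [x], a, t, ht => by simp [triples] at ht
  | x :: y :: r, a, t, ht => by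
    rcases List.mem_cons.1 ht with rfl | ht
    · simp
    · exact List.mem_cons_of_mem _ (triples_mid_mem ht)

/-- in a two-layer DAG `Xs ≺ Ys` with a faithful distribution, if there is a
directed path `X_{k₀} → Y_{j₁} → ⋯ → Y_{j₀}` lying entirely within `Ys` after the first
step, and `X_{k₀} → Y_{j₀}` is not an edge, then `Y_{j₀}` is dependent on `X_{k₀}` given
`X_{-k₀}`; hence `H⁰` contains the false positive edge `X_{k₀} → Y_{j₀}`. -/
theorem H0_false_positive
    {V : Type*} [Fintype V] [DecidableEq V]
    (G : V → V → Prop) (Indep : V → V → Finset V → Prop)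
    (Xs Ys : Finset V)
    (hpart : ∀ v, v ∈ Xs ∨ v ∈ Ys) (hdisj : Disjoint Xs Ys)
    (horder : ∀ a ∈ Ys, ∀ b ∈ Xs, ¬ G a b)
    (hacy : Acyclic G)
    (hMarkov : ∀ a b S, DSep G S a b → Indep a b S)
    (hFaithful : ∀ a b S, Indep a b S → DSep G S a b)
    (k0 j0 j1 : V) (hk0 : k0 ∈ Xs) (hj0 : j0 ∈ Ys) (hj1 : j1 ∈ Ys)
    (hfirst : G k0 j1)
    (hpath : Relation.ReflTransGen (fun a b => G a b ∧ b ∈ Ys) j1 j0)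
    (hnoedge : ¬ G k0 j0) :
    ¬ Indep k0 j0 (Xs \ {k0}) := by
  intro hI
  have hds : DSep G (Xs \ {k0}) k0 j0 := hFaithful _ _ _ hI
  set R : V → V → Prop := fun a b => G a b ∧ b ∈ Ys with hR
  obtain ⟨l, hchain, hlast⟩ := List.exists_isChain_cons_of_relationReflTransGen hpath
  -- R is acyclic
  have hacyR : ∀ v, ¬ Relation.TransGen R v v := fun v hv =>
    hacy v (Relation.TransGen.mono (fun a b (h : R a b) => h.1) _ _ hv)
  -- all members of l are in Ys
  have hmemYs : ∀ b ∈ l, b ∈ Ys := by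
    intro b hb
    have := chain_mem_transGen' hchain hb
    rcases Relation.TransGen.tail'_iff.1 this with ⟨c, _, hcb⟩
    exact hcb.2
  have hk0nYs : k0 ∉ Ys := Finset.disjoint_left.1 hdisj hk0
  set p : List V := k0 :: j1 :: l with hp
  have htrail : IsTrail G k0 j0 p := by
    refine ⟨?_, rfl, ?_, ?_⟩
    · show List.Chain (fun x y => G x y ∨ G y x) k0 (j1 :: l)
      exact List.chain_cons.2 ⟨Or.inl hfirst,
        (hchain.imp (fun a b h => Or.inl h.1))⟩
    · rw [hp, List.getLast?_cons_cons, List.getLast?_eq_getLast (List.cons_ne_nil _ _), hlast]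
    · refine List.nodup_cons.2 ⟨?_, chain_nodup' hacyR hchain⟩
      intro hmem
      rcases List.mem_cons.1 hmem with rfl | hmem
      · exact hk0nYs hj1
      · exact hk0nYs (hmemYs _ hmem)
  obtain ⟨t, ht, hbt⟩ := hds p htrail
  -- every triple is directed x → y → z with y ∈ Ys
  have hGchain : List.Chain' G p := by
    show List.Chain G k0 (j1 :: l)
    exact List.chain_cons.2 ⟨hfirst, hchain.imp (fun a b h => h.1)⟩
  obtain ⟨hxy, hyz⟩ := triples_chain' hGchain t ht
  have hyYs : t.2.1 ∈ Ys := by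
    have := triples_mid_mem ht
    rcases List.mem_cons.1 this with h | h
    · exact h ▸ hj1
    · exact hmemYs _ h
  rcases hbt with ⟨_, hzy, _⟩ | ⟨_, hyS⟩
  · exact hacy t.2.1 (Relation.TransGen.head hyz (Relation.TransGen.single hzy))
  · exact Finset.disjoint_left.1 hdisj (Finset.mem_sdiff.1 hyS).1 hyYs
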